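/- arXiv:2406.20019 — 3 statements merged into one kernel-verified Lean document; each statement's English description precedes it below -/
import Mathlib

section
/- Let a, b, λ, P be real numbers with |b| ≤ |a|, |λ| < 1, and P ≥ 0. Then ψ(((a² + b² − 2λab)/(1 − λ²))·P) − ψ(a²·P) ≤ (1/2)·log₂(2/(1 − |λ|)), where ψ(x) = (1/2)·log₂(1+x). -/
noncomputable def psi (x : ℝ) : ℝ := (1/2) * Real.logb 2 (1 + x)

theorem df_gap (a b l P : ℝ) (hb : |b| ≤ |a|) (hl : |l| < 1) (hP : 0 ≤ P) :
    psi (((a^2 + b^2 - 2 * l * a * b) / (1 - l^2)) * P) - psi (a^2 * P)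
      ≤ (1/2) * Real.logb 2 (2 / (1 - |l|)) := by
  have hl0 : 0 ≤ |l| := abs_nonneg l
  have h1 : 0 < 1 - |l| := by linarith
  have h2 : 0 < 1 - l^2 := by nlinarith [sq_abs l]
  set c : ℝ := 2 / (1 - |l|) with hc
  have hc2 : 2 ≤ c := by
    rw [hc, le_div_iff₀ h1]; nlinarith
  have hb2 : b^2 ≤ a^2 := by nlinarith [sq_abs a, sq_abs b, abs_nonneg a, abs_nonneg b]
  have habs : |a| * |b| ≤ a^2 := by nlinarith [sq_abs a, abs_nonneg a]
  have hlab : -(2*l*a*b) ≤ 2 * |l| * a^2 := by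
    have h3 : -(l*(a*b)) ≤ |l*(a*b)| := neg_le_abs _
    have h4 : |l*(a*b)| = |l| * (|a| * |b|) := by rw [abs_mul, abs_mul]
    nlinarith [mul_le_mul_of_nonneg_left habs hl0]
  have hnum : a^2 + b^2 - 2*l*a*b ≤ (1+|l|) * (2*a^2) := by nlinarith
  have hnum0 : 0 ≤ a^2 + b^2 - 2*l*a*b := by
    nlinarith [sq_nonneg (a-b), sq_nonneg (a+b), (abs_le.mp hl.le).1, (abs_le.mp hl.le).2]
  have hkey : (a^2 + b^2 - 2*l*a*b)/(1-l^2) ≤ c * a^2 := by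
    rw [div_le_iff₀ h2, hc, div_mul_eq_mul_div, div_mul_eq_mul_div, le_div_iff₀ h1]
    nlinarith [sq_abs l, sq_nonneg a, hnum]
  have hx0 : 0 ≤ ((a^2 + b^2 - 2*l*a*b)/(1-l^2)) * P :=
    mul_nonneg (div_nonneg hnum0 h2.le) hP
  have hxP : ((a^2 + b^2 - 2*l*a*b)/(1-l^2)) * P ≤ c * a^2 * P :=
    mul_le_mul_of_nonneg_right hkey hP
  have hA : (0:ℝ) < 1 + ((a^2 + b^2 - 2*l*a*b)/(1-l^2)) * P := by linarith
  have hB : (0:ℝ) < 1 + a^2 * P := by positivity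
  have hcB : 0 ≤ c * (a^2 * P) := by positivity
  have hmain : 1 + ((a^2 + b^2 - 2*l*a*b)/(1-l^2)) * P ≤ c * (1 + a^2 * P) := by
    nlinarith
  unfold psi
  rw [← mul_sub]
  have hlog : Real.logb 2 (1 + ((a^2 + b^2 - 2*l*a*b)/(1-l^2)) * P)
      ≤ Real.logb 2 c + Real.logb 2 (1 + a^2 * P) := by
    calc Real.logb 2 (1 + ((a^2 + b^2 - 2*l*a*b)/(1-l^2)) * P)
        ≤ Real.logb 2 (c * (1 + a^2 * P)) :=
          Real.logb_le_logb_of_le one_lt_two hA hmain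
      _ = Real.logb 2 c + Real.logb 2 (1 + a^2 * P) :=
          Real.logb_mul (by linarith) (by linarith)
  have : Real.logb 2 (1 + (a ^ 2 + b ^ 2 - 2 * l * a * b) / (1 - l ^ 2) * P)
      - Real.logb 2 (1 + a ^ 2 * P) ≤ Real.logb 2 c := by
    have := hlog; ring_nf at this ⊢; linarith
  linarith [this]
end

section
/- Let P > 0 and C₁₂, C₂₁ ≥ 0, and let ψ(x) = (1/2)·log₂(1+x). Define for each β ∈ [0,1] the set S(β) = {(R₀,R₁) ∈ ℝ≥0² : R₀ ≤ ψ((1−β)P/(βP+1)) + C₁₂, R₀+R₁ ≤ ψ(P) + C₂₁, R₀+R₁ ≤ ψ(βP) + ψ((1−β)P/(βP+1)) + C₁₂ + C₂₁}. Then ⋃_{β∈[0,1]} S(β) = {(R₀,R₁) ∈ ℝ≥0² : R₀ ≤ ψ(P) + C₁₂, R₀+R₁ ≤ ψ(P) + C₂₁}. -/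
lemma psi_mono {x y : ℝ} (hx : 0 ≤ x) (hxy : x ≤ y) : psi x ≤ psi y := by
  unfold psi
  have : Real.logb 2 (1 + x) ≤ Real.logb 2 (1 + y) :=
    Real.logb_le_logb_of_le (by norm_num : (1:ℝ) < 2) (by linarith) (by linarith)
  linarith

theorem capacity_region_union (P C12 C21 : ℝ) (hP : 0 < P) (h12 : 0 ≤ C12) (h21 : 0 ≤ C21) :
    (⋃ β ∈ Set.Icc (0:ℝ) 1,
        {p : ℝ × ℝ | 0 ≤ p.1 ∧ 0 ≤ p.2 ∧
          p.1 ≤ psi ((1 - β) * P / (β * P + 1)) + C12 ∧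
          p.1 + p.2 ≤ psi P + C21 ∧
          p.1 + p.2 ≤ psi (β * P) + psi ((1 - β) * P / (β * P + 1)) + C12 + C21})
      = {p : ℝ × ℝ | 0 ≤ p.1 ∧ 0 ≤ p.2 ∧ p.1 ≤ psi P + C12 ∧ p.1 + p.2 ≤ psi P + C21} := by
  ext p
  simp only [Set.mem_iUnion, Set.mem_setOf_eq, Set.mem_Icc]
  constructor
  · rintro ⟨β, ⟨hβ0, hβ1⟩, h1, h2, h3, h4, h5⟩
    refine ⟨h1, h2, ?_, h4⟩
    have hden : (0:ℝ) < β * P + 1 := by nlinarith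
    have harg : (0:ℝ) ≤ (1 - β) * P / (β * P + 1) :=
      div_nonneg (by nlinarith) hden.le
    have hle : (1 - β) * P / (β * P + 1) ≤ P := by
      rw [div_le_iff₀ hden]; nlinarith [mul_nonneg (mul_nonneg hβ0 hP.le) hP.le]
    have := psi_mono harg hle
    linarith
  · rintro ⟨h1, h2, h3, h4⟩
    refine ⟨0, ⟨le_refl 0, by norm_num⟩, h1, h2, ?_, h4, ?_⟩
    · simpa using h3
    · have hpsi0 : psi (0 * P) = 0 := by simp [psi]
      rw [hpsi0]
      have : ((1:ℝ) - 0) * P / (0 * P + 1) = P := by ring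
      rw [this]; linarith
end

section
/- Let a, λ, P be real numbers with |λ| < 1 and P ≥ 0, and let μ = a² + b² − 2λab for some real b. Then ψ((μ + (1−λ²)·a²)·P/(2(1−λ²))) ≥ ψ(μ·P/(1−λ²)) − 1/2, where ψ(x) = (1/2)·log₂(1+x) and assuming μ ≥ 0. -/
theorem half_bit_gap (a b l P : ℝ) (hl : |l| < 1) (hP : 0 ≤ P)
    (μ : ℝ) (hμ : μ = a^2 + b^2 - 2 * l * a * b) (hμ0 : 0 ≤ μ) :
    psi ((μ + (1 - l^2) * a^2) * P / (2 * (1 - l^2))) ≥ psi (μ * P / (1 - l^2)) - 1/2 := by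
  have hl2 : l^2 < 1 := by
    have := abs_lt.mp hl; nlinarith
  have hs : 0 < 1 - l^2 := by linarith
  set x := (μ + (1 - l^2) * a^2) * P / (2 * (1 - l^2)) with hx
  set y := μ * P / (1 - l^2) with hy
  have hx0 : 0 ≤ x := by
    apply div_nonneg _ (by linarith)
    have : 0 ≤ (1 - l^2) * a^2 := by positivity
    nlinarith
  have hy0 : 0 ≤ y := by
    apply div_nonneg _ (by linarith)
    positivity
  have hxpos : 0 < 1 + x := by linarith
  have key : 1 + y ≤ 2 * (1 + x) := by
    rw [hx, hy]
    rw [← sub_nonneg]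
    have e : 2 * (1 + (μ + (1 - l^2) * a^2) * P / (2 * (1 - l^2))) - (1 + μ * P / (1 - l^2))
        = 1 + a^2 * P := by
      field_simp
      ring
    rw [e]
    positivity
  have hlog : Real.logb 2 (1 + y) ≤ 1 + Real.logb 2 (1 + x) := by
    calc Real.logb 2 (1 + y) ≤ Real.logb 2 (2 * (1 + x)) :=
          Real.logb_le_logb_of_le one_lt_two (by linarith) key
      _ = 1 + Real.logb 2 (1 + x) := by
          rw [Real.logb_mul (by norm_num) hxpos.ne', Real.logb_self_eq_one one_lt_two]
  unfold psi
  linarith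
end
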